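/- Let φ be a primitive acyclic morphism with leftmost conjugate φ_L and rightmost conjugate φ_R, and let w be the conjugate word with wφ_L(x) = φ_R(x)w for all x. If u is a factor of a fixed point of φ, then φ_R(u)w is also a factor of that fixed point's language. -/

import Mathlib

/-- `k`-fold concatenation of a word with itself. -/
def listPow {A : Type*} (l : List A) : ℕ → List A
  | 0 => []
  | n + 1 => l ++ listPow l n

/-- Application of a morphism (given by its images of letters) to a word. -/
def wordMap {A : Type*} (φ : A → List A) (x : List A) : List A :=
  x.flatMap φ

/-- `k`-th power (iterate) of a morphism. -/
def morPow {A : Type*} (φ : A → List A) : ℕ → A → List A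
  | 0 => fun a => [a]
  | k + 1 => fun a => wordMap (morPow φ k) (φ a)

/-- `φ` is a right conjugate of `ψ` (notation `ψ ▷ φ`):
there is a word `w` with `w ψ(x) = φ(x) w` for all `x`. -/
def IsRightConjOf {A : Type*} (φ ψ : A → List A) : Prop :=
  ∃ w : List A, ∀ a : A, w ++ ψ a = φ a ++ w

/-- `φ` and `ψ` are conjugate morphisms. -/
def AreConjugates {A : Type*} (φ ψ : A → List A) : Prop :=
  IsRightConjOf φ ψ ∨ IsRightConjOf ψ φ

/-- `φL` is the leftmost conjugate of `φ`. -/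
def IsLeftmostConjOf {A : Type*} (φL φ : A → List A) : Prop :=
  IsRightConjOf φ φL ∧ ∀ ψ : A → List A, IsRightConjOf φL ψ → ψ = φL

/-- `φR` is the rightmost conjugate of `φ`. -/
def IsRightmostConjOf {A : Type*} (φR φ : A → List A) : Prop :=
  IsRightConjOf φR φ ∧ ∀ ψ : A → List A, IsRightConjOf ψ φR → ψ = φR

/-- A morphism is cyclic if all images of letters are powers of a common word. -/
def CyclicMorphism {A : Type*} (φ : A → List A) : Prop :=
  ∃ w : List A, ∀ a : A, ∃ n : ℕ, φ a = listPow w n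

/-- First letter of the image of each letter. -/
def Fst {A : Type*} (φ : A → List A) : A → Option A :=
  fun a => (φ a).head?

/-- Last letter of the image of each letter. -/
def Lst {A : Type*} (φ : A → List A) : A → Option A :=
  fun a => (φ a).getLast?

/-- A morphism is in class P if there is a palindrome `p` which is a prefix of
every `φ(α)` and such that `φ(α) p` is a palindrome for every letter `α`. -/
def IsClassP {A : Type*} (φ : A → List A) : Prop :=
  ∃ p : List A, p.reverse = p ∧
    ∀ a : A, p <+: φ a ∧ (φ a ++ p).reverse = φ a ++ p

/-- The finite word `v` is a factor of the infinite word `u`. -/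
def IsFactor {A : Type*} (u : ℕ → A) (v : List A) : Prop :=
  ∃ i : ℕ, v = (List.range v.length).map fun j => u (i + j)

/-- An infinite word is uniformly recurrent if every factor occurs in every
sufficiently long factor. -/
def UnifRecurrent {A : Type*} (u : ℕ → A) : Prop :=
  ∀ v : List A, IsFactor u v → ∃ n : ℕ,
    ∀ f : List A, IsFactor u f → f.length = n → v <:+: f

/-- An infinite word is eventually periodic. -/
def EventuallyPeriodic {A : Type*} (u : ℕ → A) : Prop :=
  ∃ p : ℕ, 0 < p ∧ ∃ N : ℕ, ∀ n : ℕ, N ≤ n → u (n + p) = u n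

/-- A factor `v` is right special in `u`. -/
def RightSpecial {A : Type*} (u : ℕ → A) (v : List A) : Prop :=
  ∃ x y : A, x ≠ y ∧ IsFactor u (v ++ [x]) ∧ IsFactor u (v ++ [y])

/-- A factor `v` is left special in `u`. -/
def LeftSpecial {A : Type*} (u : ℕ → A) (v : List A) : Prop :=
  ∃ x y : A, x ≠ y ∧ IsFactor u (x :: v) ∧ IsFactor u (y :: v)

/-- A morphism is primitive if some power of it sends every letter to a word
containing every letter. -/
def Primitive {A : Type*} (φ : A → List A) : Prop :=
  ∃ k : ℕ, ∀ a b : A, b ∈ morPow φ k a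

section Helpers

variable {A : Type*}

lemma wordMap_nil (φ : A → List A) : wordMap φ [] = [] := rfl

lemma wordMap_cons (φ : A → List A) (a : A) (x : List A) :
    wordMap φ (a :: x) = φ a ++ wordMap φ x := by
  simp [wordMap]

lemma wordMap_append (φ : A → List A) (x y : List A) :
    wordMap φ (x ++ y) = wordMap φ x ++ wordMap φ y := by
  simp [wordMap]

lemma wordMap_singleton (φ : A → List A) (a : A) : wordMap φ [a] = φ a := by
  simp [wordMap]

lemma wordMap_id (x : List A) : wordMap (fun a => [a]) x = x := by
  simp [wordMap]

lemma wordMap_comp (ψ χ : A → List A) (x : List A) :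
    wordMap ψ (wordMap χ x) = wordMap (fun a => wordMap ψ (χ a)) x := by
  simp [wordMap, List.flatMap_assoc]

lemma listPow_add (l : List A) (m n : ℕ) :
    listPow l (m + n) = listPow l m ++ listPow l n := by
  induction m with
  | zero => simp [listPow]
  | succ m ih =>
      have : m + 1 + n = (m + n) + 1 := by omega
      rw [this, listPow, listPow, ih, List.append_assoc]

lemma listPow_length (l : List A) (n : ℕ) : (listPow l n).length = n * l.length := by
  induction n with
  | zero => simp [listPow]
  | succ n ih => simp [listPow, ih]; ring

lemma wordMap_replicate (φ : A → List A) (a : A) (m : ℕ) :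
    wordMap φ (List.replicate m a) = listPow (φ a) m := by
  induction m with
  | zero => rfl
  | succ m ih => rw [List.replicate_succ, wordMap_cons, ih]; rfl

lemma listPow_listPow (r : List A) (k m : ℕ) :
    listPow (listPow r k) m = listPow r (m * k) := by
  induction m with
  | zero => simp [listPow]
  | succ m ih =>
      rw [listPow, ih, ← listPow_add]
      congr 1
      ring

lemma morPow_add (φ : A → List A) (j k : ℕ) (a : A) :
    morPow φ (j + k) a = wordMap (morPow φ j) (morPow φ k a) := by
  induction k generalizing a with
  | zero => simp [morPow, wordMap_singleton]
  | succ k ih =>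
      have h1 : j + (k + 1) = (j + k) + 1 := by omega
      rw [h1]
      show wordMap (morPow φ (j + k)) (φ a) = wordMap (morPow φ j) (wordMap (morPow φ k) (φ a))
      rw [wordMap_comp]
      congr 1
      funext b
      exact ih b

lemma wordMap_morPow_succ (φ : A → List A) (k : ℕ) (x : List A) :
    wordMap (morPow φ (k + 1)) x = wordMap (morPow φ k) (wordMap φ x) := by
  rw [wordMap_comp]
  rfl

lemma wordMap_length_ge (ψ : A → List A) (c : ℕ) (h : ∀ a, c ≤ (ψ a).length)
    (x : List A) : x.length * c ≤ (wordMap ψ x).length := by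
  induction x with
  | nil => simp [wordMap]
  | cons a t ih =>
      rw [wordMap_cons]
      simp only [List.length_cons, List.length_append, Nat.succ_mul]
      have := h a
      omega

lemma conj_word {ψ χ : A → List A} {c : List A} (h : ∀ a, c ++ ψ a = χ a ++ c) :
    ∀ x : List A, c ++ wordMap ψ x = wordMap χ x ++ c := by
  intro x
  induction x with
  | nil => simp [wordMap]
  | cons a t ih =>
      rw [wordMap_cons, wordMap_cons, ← List.append_assoc, h a, List.append_assoc, ih,
        List.append_assoc]

lemma conjListPow {c y y' : List A} (h : c ++ y = y' ++ c) :
    ∀ m : ℕ, c ++ listPow y m = listPow y' m ++ c := by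
  intro m
  induction m with
  | zero => simp [listPow]
  | succ m ih =>
      rw [listPow, listPow, ← List.append_assoc, h, List.append_assoc, ih, List.append_assoc]

lemma prefix_cut {x y t : List A} (h : x <+: y ++ t) (hl : x.length ≤ y.length) :
    x <+: y := by
  obtain ⟨s, hs⟩ := h
  have hx : x = y.take x.length := by
    have h1 := congrArg (List.take x.length) hs
    rwa [List.take_append_of_le_length (le_refl _), List.take_length,
      List.take_append_of_le_length hl] at h1
  rw [hx]
  exact List.take_prefix _ _

lemma suffix_cut {x y t : List A} (h : x <:+ t ++ y) (hl : x.length ≤ y.length) :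
    x <:+ y := by
  obtain ⟨s, hs⟩ := h
  have hst : t.length ≤ s.length := by
    have := congrArg List.length hs
    simp at this
    omega
  have hx : x = y.drop (s.length - t.length) := by
    have h1 := congrArg (List.drop s.length) hs
    rw [List.drop_append_of_le_length (le_refl _), List.drop_length] at h1
    have h2 : s.length = t.length + (s.length - t.length) := by omega
    rw [h2] at h1
    rw [List.drop_append] at h1
    simpa [List.drop_eq_nil_of_le (by omega : t.length ≤ t.length + (s.length - t.length))] using h1
  rw [hx]
  exact List.drop_suffix _ _

lemma suffix_listPow {z r : List A} :
    ∀ M : ℕ, z <:+ listPow r M → ∃ q j, q <:+ r ∧ z = q ++ listPow r j := by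
  intro M
  induction M with
  | zero =>
      intro h
      have hz : z = [] := List.suffix_nil.mp h
      exact ⟨[], 0, List.nil_suffix, by simp [hz, listPow]⟩
  | succ M ih =>
      intro h
      rw [listPow] at h
      by_cases hl : z.length ≤ (listPow r M).length
      · exact ih (suffix_cut h hl)
      · obtain ⟨s, hs⟩ := h
        have hslen : s.length ≤ r.length := by
          have := congrArg List.length hs
          simp at this
          omega
        refine ⟨r.drop s.length, M, List.drop_suffix _ _, ?_⟩
        have h1 := congrArg (List.drop s.length) hs
        rw [List.drop_append_of_le_length (le_refl _), List.drop_length,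
          List.drop_append_of_le_length hslen] at h1
        exact h1

lemma q_conj (p q : List A) : ∀ n : ℕ,
    q ++ listPow (p ++ q) n = listPow (q ++ p) n ++ q := by
  intro n
  induction n with
  | zero => simp [listPow]
  | succ n ih =>
      show q ++ ((p ++ q) ++ listPow (p ++ q) n) = ((q ++ p) ++ listPow (q ++ p) n) ++ q
      calc q ++ ((p ++ q) ++ listPow (p ++ q) n)
          = (q ++ p) ++ (q ++ listPow (p ++ q) n) := by simp [List.append_assoc]
        _ = (q ++ p) ++ (listPow (q ++ p) n ++ q) := by rw [ih]
        _ = ((q ++ p) ++ listPow (q ++ p) n) ++ q := by simp [List.append_assoc]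

lemma comm_prefix_pow {x d : List A} (h : x ++ d = d ++ x) (m : ℕ) :
    x ++ listPow d m = listPow d m ++ x := conjListPow h m

lemma comm_root (d : List A) (hd : d ≠ []) :
    ∃ r : List A, r ≠ [] ∧ ∀ x : List A, x ++ d = d ++ x → ∃ k, x = listPow r k := by
  classical
  have hQ : ∃ n, ∃ r : List A, r.length = n ∧ r ≠ [] ∧ r ++ d = d ++ r :=
    ⟨d.length, d, rfl, hd, rfl⟩
  obtain ⟨r, hrlen, hrne, hrd⟩ := Nat.find_spec hQ
  refine ⟨r, hrne, ?_⟩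
  have hdpos : 0 < d.length := List.length_pos_iff.mpr hd
  have main : ∀ N, ∀ x : List A, x.length ≤ N → x ++ d = d ++ x → ∃ k, x = listPow r k := by
    intro N
    induction N with
    | zero =>
        intro x hx _
        have : x = [] := List.length_eq_zero_iff.mp (Nat.le_zero.mp hx)
        exact ⟨0, by simp [this, listPow]⟩
    | succ N ih =>
        intro x hx hcomm
        rcases eq_or_ne x [] with h | h
        · exact ⟨0, by simp [h, listPow]⟩
        · have hxlen : Nat.find hQ ≤ x.length := Nat.find_min' hQ ⟨x, rfl, h, hcomm⟩
          have hrx : r.length ≤ x.length := hrlen ▸ hxlen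
          -- both x and r are prefixes of listPow d x.length
          have hxp : x <+: listPow d x.length := by
            have h1 : x <+: x ++ listPow d x.length := List.prefix_append _ _
            rw [comm_prefix_pow hcomm] at h1
            exact prefix_cut h1 (by rw [listPow_length]; nlinarith)
          have hrp : r <+: listPow d x.length := by
            have h1 : r <+: r ++ listPow d x.length := List.prefix_append _ _
            rw [comm_prefix_pow hrd] at h1
            exact prefix_cut h1 (by rw [listPow_length]; nlinarith)
          rcases List.prefix_or_prefix_of_prefix hrp hxp with hpre | hpre
          · obtain ⟨x', hx'⟩ := hpre
            have hx'comm : x' ++ d = d ++ x' := by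
              have h1 : (r ++ x') ++ d = d ++ (r ++ x') := hx' ▸ hcomm
              have h2 : r ++ (x' ++ d) = r ++ (d ++ x') := by
                calc r ++ (x' ++ d) = (r ++ x') ++ d := (List.append_assoc _ _ _).symm
                  _ = d ++ (r ++ x') := h1
                  _ = (d ++ r) ++ x' := (List.append_assoc _ _ _).symm
                  _ = (r ++ d) ++ x' := by rw [hrd]
                  _ = r ++ (d ++ x') := List.append_assoc _ _ _
              exact List.append_cancel_left h2
            have hrpos : 0 < r.length := List.length_pos_iff.mpr hrne
            have hx'len : x'.length ≤ N := by
              have := congrArg List.length hx'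
              simp at this
              omega
            obtain ⟨k, hk⟩ := ih x' hx'len hx'comm
            exact ⟨k + 1, by rw [← hx', hk]; rfl⟩
          · have : x = r := List.IsPrefix.eq_of_length_le hpre hrx
            exact ⟨1, by simp [this, listPow]⟩
  intro x hcomm
  exact main x.length x (le_refl _) hcomm

lemma eq_listPow_of_all_eq (a : A) (l : List A) (h : ∀ b ∈ l, b = a) :
    l = listPow [a] l.length := by
  induction l with
  | nil => rfl
  | cons b t ih =>
      have hb : b = a := h b List.mem_cons_self
      have ht := ih (fun c hc => h c (List.mem_cons_of_mem _ hc))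
      rw [List.length_cons]
      show b :: t = [a] ++ listPow [a] t.length
      rw [hb, ← ht]
      rfl

lemma two_le_length_of_mem {a b : A} {l : List A} (ha : a ∈ l) (hb : b ∈ l)
    (hne : a ≠ b) : 2 ≤ l.length := by
  match l with
  | [] => simp at ha
  | [x] =>
      simp at ha hb
      exact absurd (ha.trans hb.symm) hne
  | x :: y :: t => simp

lemma factor_of_split (u : ℕ → A) {m : ℕ} {a b c : List A}
    (h : (List.range m).map u = a ++ b ++ c) :
    b = (List.range b.length).map (fun j => u (a.length + j)) := by
  have hlen : m = a.length + b.length + c.length := by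
    have := congrArg List.length h
    simp at this
    omega
  apply List.ext_getElem
  · simp
  intro j hj hj'
  simp only [List.getElem_map, List.getElem_range]
  have hjm : a.length + j < ((List.range m).map u).length := by simp; omega
  have e2 : ((List.range m).map u)[a.length + j] = u (a.length + j) := by simp
  rw [List.getElem_of_eq h hjm] at e2
  rw [List.getElem_append_left (by simp; omega : a.length + j < (a ++ b).length)] at e2
  rw [List.getElem_append_right (by simp : a.length ≤ a.length + j)] at e2
  have hidx : a.length + j - a.length = j := by omega
  simp only [hidx] at e2
  exact e2

end Helpers

section Mid

variable {A : Type*}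

lemma conj_word_unique [Nonempty A] {φL φR : A → List A} {w1 w2 : List A}
    (hne : ∀ a, φR a ≠ [])
    (h1 : ∀ a, w1 ++ φL a = φR a ++ w1) (h2 : ∀ a, w2 ++ φL a = φR a ++ w2) :
    w1 = w2 ∨ ∃ d : List A, d ≠ [] ∧ ∀ a, d ++ φL a = φL a ++ d := by
  classical
  obtain ⟨a₀⟩ := (inferInstance : Nonempty A)
  set m := max w1.length w2.length with hm
  have hpos : 0 < (φR a₀).length := List.length_pos_iff.mpr (hne a₀)
  have hpref : ∀ c : List A, (∀ a, c ++ φL a = φR a ++ c) → c.length ≤ m →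
      c <+: listPow (φR a₀) m := by
    intro c hc hcm
    have h3 : c <+: c ++ listPow (φL a₀) m := List.prefix_append _ _
    rw [conjListPow (hc a₀) m] at h3
    exact prefix_cut h3 (by rw [listPow_length]; nlinarith)
  have hp1 : w1 <+: listPow (φR a₀) m := hpref w1 h1 (le_max_left _ _)
  have hp2 : w2 <+: listPow (φR a₀) m := hpref w2 h2 (le_max_right _ _)
  have key : ∀ x y : List A, (∀ a, x ++ φL a = φR a ++ x) → (∀ a, y ++ φL a = φR a ++ y) →
      x <+: y → x = y ∨ ∃ d : List A, d ≠ [] ∧ ∀ a, d ++ φL a = φL a ++ d := by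
    intro x y hx hy hxy
    obtain ⟨d, hd⟩ := hxy
    rcases eq_or_ne d [] with hdnil | hdne
    · left; rw [← hd, hdnil, List.append_nil]
    · right
      refine ⟨d, hdne, fun a => ?_⟩
      have hyx : (x ++ d) ++ φL a = φR a ++ (x ++ d) := hd ▸ hy a
      have h4 : x ++ (d ++ φL a) = x ++ (φL a ++ d) := by
        calc x ++ (d ++ φL a) = (x ++ d) ++ φL a := (List.append_assoc _ _ _).symm
          _ = φR a ++ (x ++ d) := hyx
          _ = (φR a ++ x) ++ d := (List.append_assoc _ _ _).symm
          _ = (x ++ φL a) ++ d := by rw [← hx a]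
          _ = x ++ (φL a ++ d) := List.append_assoc _ _ _
      exact List.append_cancel_left h4
  rcases List.prefix_or_prefix_of_prefix hp1 hp2 with hp | hp
  · exact key w1 w2 h1 h2 hp
  · rcases key w2 w1 h2 h1 hp with h | h
    · exact Or.inl h.symm
    · exact Or.inr h

lemma cyclic_of_conj (φ φL : A → List A) (z r : List A)
    (hz : ∀ a, z ++ φL a = φ a ++ z)
    (hφ : ∀ a, φ a ≠ []) (hr : r ≠ [])
    (hpow : ∀ a, ∃ k, φL a = listPow r k) :
    ∃ s : List A, ∀ a, ∃ n, φ a = listPow s n := by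
  classical
  rcases isEmpty_or_nonempty A with hA | hA
  · exact ⟨[], fun a => (hA.false a).elim⟩
  have hlen : ∀ a : A, (φL a).length = (φ a).length := by
    intro a
    have := congrArg List.length (hz a)
    simp at this
    omega
  rcases eq_or_ne z [] with hznil | hzne
  · refine ⟨r, fun a => ?_⟩
    obtain ⟨k, hk⟩ := hpow a
    have : φL a = φ a := by
      have := hz a
      rw [hznil] at this
      simpa using this
    exact ⟨k, this ▸ hk⟩
  · obtain ⟨a₀⟩ := hA
    obtain ⟨k₀, hk₀⟩ := hpow a₀
    have hrpos : 0 < r.length := List.length_pos_iff.mpr hr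
    have hk₀pos : 0 < k₀ := by
      rcases Nat.eq_zero_or_pos k₀ with h | h
      · exfalso
        rw [h] at hk₀
        have : (φL a₀).length = 0 := by rw [hk₀]; rfl
        have h2 := hlen a₀
        have h3 : 0 < (φ a₀).length := List.length_pos_iff.mpr (hφ a₀)
        omega
      · exact h
    set m := z.length with hmz
    have hconj := conjListPow (hz a₀) m
    -- z ++ listPow (φL a₀) m = listPow (φ a₀) m ++ z
    have hLpow : listPow (φL a₀) m = listPow r (m * k₀) := by
      rw [hk₀, listPow_listPow]
    have hsuf : z <:+ listPow r (m * k₀) := by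
      have h3 : z <:+ listPow (φ a₀) m ++ z := List.suffix_append _ _
      rw [← hconj, hLpow] at h3
      apply suffix_cut h3
      rw [listPow_length]
      calc z.length = m := rfl
        _ ≤ m * (k₀ * r.length) := Nat.le_mul_of_pos_right m (by positivity)
        _ = m * k₀ * r.length := by ring
    obtain ⟨q, j, hq, hzq⟩ := suffix_listPow (m * k₀) hsuf
    obtain ⟨p, hp⟩ := hq
    set s := q ++ p with hs
    have key : ∀ n : ℕ, z ++ listPow r n = listPow s n ++ z := by
      intro n
      have h5 : listPow s j ++ q = z := by
        rw [hzq, hs, ← q_conj p q j, hp]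
      calc z ++ listPow r n = (q ++ listPow r j) ++ listPow r n := by rw [hzq]
        _ = q ++ listPow r (j + n) := by rw [List.append_assoc, ← listPow_add]
        _ = q ++ listPow (p ++ q) (j + n) := by rw [hp]
        _ = listPow (q ++ p) (j + n) ++ q := q_conj p q (j + n)
        _ = (listPow s n ++ listPow s j) ++ q := by
              rw [← hs, Nat.add_comm j n, listPow_add]
        _ = listPow s n ++ (listPow s j ++ q) := List.append_assoc _ _ _
        _ = listPow s n ++ z := by rw [h5]
    refine ⟨s, fun a => ?_⟩
    obtain ⟨k, hk⟩ := hpow a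
    refine ⟨k, ?_⟩
    have h6 : φ a ++ z = listPow s k ++ z := by
      rw [← hz a, hk, key k]
    exact List.append_cancel_right h6

lemma morPow_ne_nil {φ : A → List A} (hφ : ∀ a, φ a ≠ []) :
    ∀ k a, morPow φ k a ≠ [] := by
  intro k
  induction k with
  | zero => intro a; simp [morPow]
  | succ k ih =>
      intro a
      show wordMap (morPow φ k) (φ a) ≠ []
      have h1 : (φ a).length * 1 ≤ (wordMap (morPow φ k) (φ a)).length :=
        wordMap_length_ge _ 1 (fun b => List.length_pos_iff.mpr (ih b)) _
      have h2 : 0 < (φ a).length := List.length_pos_iff.mpr (hφ a)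
      intro hcon
      rw [hcon] at h1
      simp only [Nat.mul_one, List.length_nil, Nat.le_zero] at h1
      omega

lemma growth {φ : A → List A} {k₀ : ℕ} (hk : ∀ a, 2 ≤ (morPow φ k₀ a).length) (c : ℕ) :
    ∃ K, ∀ a, c ≤ (morPow φ K a).length := by
  have hm : ∀ m a, 2 ^ m ≤ (morPow φ (m * k₀) a).length := by
    intro m
    induction m with
    | zero => intro a; simp [morPow]
    | succ m ih =>
        intro a
        have he : (m + 1) * k₀ = m * k₀ + k₀ := by ring
        rw [he]
        have h1 := morPow_add φ (m * k₀) k₀ a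
        rw [h1]
        have h2 : (morPow φ k₀ a).length * 2 ^ m ≤
            (wordMap (morPow φ (m * k₀)) (morPow φ k₀ a)).length :=
          wordMap_length_ge _ (2 ^ m) ih _
        have h3 := hk a
        calc (2 : ℕ) ^ (m + 1) = 2 * 2 ^ m := by ring
          _ ≤ (morPow φ k₀ a).length * 2 ^ m := Nat.mul_le_mul_right _ h3
          _ ≤ _ := h2
  refine ⟨c * k₀, fun a => ?_⟩
  calc c ≤ 2 ^ c := le_of_lt Nat.lt_two_pow_self
    _ ≤ (morPow φ (c * k₀) a).length := hm c a

end Mid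

theorem stmt11' {A : Type*} [Fintype A] (φ φL φR : A → List A) (w : List A)
    (u : ℕ → A)
    (hprim : ∃ k : ℕ, ∀ a b : A, b ∈ morPow φ k a)
    (hacyc : ¬ ∃ w0 : List A, ∀ a : A, ∃ n : ℕ, φ a = listPow w0 n)
    (hL : ∃ z : List A, ∀ a, z ++ φL a = φ a ++ z)
    (hR : ∃ v : List A, ∀ a, v ++ φ a = φR a ++ v)
    (hw : ∀ a : A, w ++ φL a = φR a ++ w)
    (hfix : ∀ n : ℕ, ∃ m : ℕ,
      wordMap φ ((List.range n).map u) = (List.range m).map u)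
    (f : List A) (hf : ∃ i : ℕ, f = (List.range f.length).map fun j => u (i + j)) :
    ∃ i : ℕ, wordMap φR f ++ w =
      (List.range (wordMap φR f ++ w).length).map fun j => u (i + j) := by
  classical
  have hNE : Nonempty A := ⟨u 0⟩
  obtain ⟨k₀, hk₀⟩ := hprim
  obtain ⟨v, hv⟩ := hR
  obtain ⟨z, hz⟩ := hL
  -- two distinct letters
  have habex : ∃ a b : A, a ≠ b := by
    by_contra hcon
    push_neg at hcon
    apply hacyc
    exact ⟨[u 0], fun a => ⟨(φ a).length,
      eq_listPow_of_all_eq (u 0) (φ a) (fun b _ => hcon b (u 0))⟩⟩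
  obtain ⟨a₁, b₁, hab⟩ := habex
  -- images of φ are nonempty
  have hφne : ∀ a, φ a ≠ [] := by
    intro a hcon
    cases k₀ with
    | zero =>
        have h := hk₀ a₁ b₁
        simp [morPow] at h
        exact hab h.symm
    | succ j =>
        have h1 : morPow φ (j + 1) a = [] := by
          show wordMap (morPow φ j) (φ a) = []
          rw [hcon]
          rfl
        have h2 := hk₀ a a
        rw [h1] at h2
        simp at h2
  have hlenR : ∀ a, (φR a).length = (φ a).length := by
    intro a
    have h1 := congrArg List.length (hv a)
    simp at h1
    omega
  have hφRne : ∀ a, φR a ≠ [] := by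
    intro a h
    have h1 := hlenR a
    rw [h] at h1
    simp at h1
    have h2 : (φ a).length = 0 := by omega
    exact hφne a (List.length_eq_zero_iff.mp h2)
  -- uniqueness of the conjugating word: w = v ++ z
  have hvz : ∀ a, (v ++ z) ++ φL a = φR a ++ (v ++ z) := by
    intro a
    calc (v ++ z) ++ φL a = v ++ (z ++ φL a) := List.append_assoc _ _ _
      _ = v ++ (φ a ++ z) := by rw [hz a]
      _ = (v ++ φ a) ++ z := (List.append_assoc _ _ _).symm
      _ = (φR a ++ v) ++ z := by rw [hv a]
      _ = φR a ++ (v ++ z) := List.append_assoc _ _ _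
  have hwvz : w = v ++ z := by
    rcases conj_word_unique hφRne hw hvz with h | ⟨d, hdne, hd⟩
    · exact h
    · exfalso
      obtain ⟨r, hrne, hroot⟩ := comm_root d hdne
      have hpowL : ∀ a, ∃ k, φL a = listPow r k := fun a => hroot (φL a) (hd a).symm
      obtain ⟨s, hs⟩ := cyclic_of_conj φ φL z r hz hφne hrne hpowL
      exact hacyc ⟨s, hs⟩
  -- growth
  have h2le : ∀ a, 2 ≤ (morPow φ k₀ a).length := fun a =>
    two_le_length_of_mem (hk₀ a a₁) (hk₀ a b₁) hab
  -- iterated prefixes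
  have hfix' : ∀ k n, ∃ m,
      wordMap (morPow φ k) ((List.range n).map u) = (List.range m).map u := by
    intro k
    induction k with
    | zero => intro n; exact ⟨n, wordMap_id _⟩
    | succ k ih =>
        intro n
        obtain ⟨m1, h1⟩ := hfix n
        obtain ⟨m2, h2⟩ := ih m1
        exact ⟨m2, by rw [wordMap_morPow_succ, h1, h2]⟩
  have hPmono : ∀ {n m : ℕ}, n ≤ m → (List.range n).map u <+: (List.range m).map u := by
    intro n m hnm
    have h1 : m = n + (m - n) := by omega
    rw [h1, List.range_add, List.map_append]
    exact List.prefix_append _ _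
  -- occurrence of f
  obtain ⟨i, hi⟩ := hf
  have hPn₀ : (List.range (i + f.length)).map u = (List.range i).map u ++ f := by
    conv_lhs => rw [List.range_add]
    rw [List.map_append, List.map_map]
    congr 1
    exact hi.symm
  obtain ⟨K, hK⟩ := growth h2le (i + f.length)
  obtain ⟨M₁, hM₁⟩ := hfix' K 1
  have hP1 : (List.range 1).map u = [u 0] := by rw [show (1:ℕ) = 0 + 1 from rfl, List.range_succ]; rfl
  have hM₁' : morPow φ K (u 0) = (List.range M₁).map u := by
    rw [← hM₁, hP1, wordMap_singleton]
  have hM₁len : i + f.length ≤ M₁ := by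
    have h1 := hK (u 0)
    rw [hM₁'] at h1
    simpa using h1
  have hpref₁ : (List.range (i + f.length)).map u <+: morPow φ K (u 0) := by
    rw [hM₁']
    exact hPmono hM₁len
  obtain ⟨τ, hτ⟩ := hpref₁
  have hτ' : morPow φ K (u 0) = ((List.range i).map u ++ f) ++ τ := by
    rw [← hτ, hPn₀]
  -- find an occurrence of f at position ≥ v.length
  obtain ⟨M₂, hM₂⟩ := hfix' (K + k₀) (v.length + 1)
  have hplus : (List.range (v.length + 1)).map u =
      (List.range v.length).map u ++ [u v.length] := by
    rw [List.range_succ]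
    simp
  obtain ⟨α, β, hαβ⟩ := List.append_of_mem (hk₀ (u v.length) (u 0))
  have hψN : morPow φ (K + k₀) (u v.length) =
      wordMap (morPow φ K) α ++ (morPow φ K (u 0) ++ wordMap (morPow φ K) β) := by
    rw [morPow_add, hαβ]
    rw [show α ++ u 0 :: β = α ++ ([u 0] ++ β) from by simp]
    rw [wordMap_append, wordMap_append, wordMap_singleton]
  have hsplit : ∃ Θ Δ : List A,
      (List.range M₂).map u = Θ ++ f ++ Δ ∧ v.length ≤ Θ.length := by
    refine ⟨wordMap (morPow φ (K + k₀)) ((List.range v.length).map u) ++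
      wordMap (morPow φ K) α ++ (List.range i).map u,
      τ ++ wordMap (morPow φ K) β, ?_, ?_⟩
    · calc (List.range M₂).map u
          = wordMap (morPow φ (K + k₀)) ((List.range (v.length + 1)).map u) := hM₂.symm
        _ = wordMap (morPow φ (K + k₀)) ((List.range v.length).map u) ++
              morPow φ (K + k₀) (u v.length) := by
            rw [hplus, wordMap_append, wordMap_singleton]
        _ = wordMap (morPow φ (K + k₀)) ((List.range v.length).map u) ++
              (wordMap (morPow φ K) α ++
                ((((List.range i).map u ++ f) ++ τ) ++ wordMap (morPow φ K) β)) := by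
            rw [hψN, hτ']
        _ = _ := by simp [List.append_assoc]
    · have h7 := wordMap_length_ge (morPow φ (K + k₀)) 1
        (fun b => List.length_pos_iff.mpr (morPow_ne_nil hφne _ b))
        ((List.range v.length).map u)
      simp only [List.length_map, List.length_range, Nat.mul_one] at h7
      simp only [List.length_append]
      omega
  obtain ⟨Θ, Δ, hsp, hΘN⟩ := hsplit
  have hocc : f = (List.range f.length).map (fun j => u (Θ.length + j)) :=
    factor_of_split u hsp
  -- final assembly
  obtain ⟨m₂, hm₂⟩ := hfix (Θ.length + f.length + z.length)
  have e1 : (List.range (Θ.length + f.length)).map u = (List.range Θ.length).map u ++ f := by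
    conv_lhs => rw [List.range_add]
    rw [List.map_append, List.map_map]
    congr 1
    exact hocc.symm
  have hdecomp : (List.range (Θ.length + f.length + z.length)).map u =
      (List.range Θ.length).map u ++ f ++
        (List.range z.length).map (fun j => u (Θ.length + f.length + j)) := by
    conv_lhs => rw [List.range_add]
    rw [List.map_append, List.map_map, e1]
    rfl
  have hwm : wordMap φ ((List.range (Θ.length + f.length + z.length)).map u) =
      wordMap φ ((List.range Θ.length).map u) ++ wordMap φ f ++
        wordMap φ ((List.range z.length).map (fun j => u (Θ.length + f.length + j))) := by
    rw [hdecomp, wordMap_append, wordMap_append]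
  have hXlen : Θ.length ≤ (wordMap φ ((List.range Θ.length).map u)).length := by
    have h8 := wordMap_length_ge φ 1 (fun b => List.length_pos_iff.mpr (hφne b))
      ((List.range Θ.length).map u)
    simpa using h8
  have hvX : v <:+ wordMap φ ((List.range Θ.length).map u) := by
    have h9 : v <:+ wordMap φR ((List.range Θ.length).map u) ++ v :=
      List.suffix_append _ _
    rw [← conj_word hv ((List.range Θ.length).map u)] at h9
    exact suffix_cut h9 (le_trans hΘN hXlen)
  obtain ⟨η, hη⟩ := hvX
  have hZlen : z.length ≤
      (wordMap φ ((List.range z.length).map (fun j => u (Θ.length + f.length + j)))).length := by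
    have h10 := wordMap_length_ge φ 1 (fun b => List.length_pos_iff.mpr (hφne b))
      ((List.range z.length).map (fun j => u (Θ.length + f.length + j)))
    simpa using h10
  have hzZ : z <+: wordMap φ ((List.range z.length).map (fun j => u (Θ.length + f.length + j))) := by
    have h11 : z <+: z ++
        wordMap φL ((List.range z.length).map (fun j => u (Θ.length + f.length + j))) :=
      List.prefix_append _ _
    rw [conj_word hz ((List.range z.length).map (fun j => u (Θ.length + f.length + j)))] at h11
    exact prefix_cut h11 hZlen
  obtain ⟨ξ, hξ⟩ := hzZ
  have hY : v ++ wordMap φ f = wordMap φR f ++ v := conj_word hv f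
  have hfinal : (List.range m₂).map u = η ++ (wordMap φR f ++ w) ++ ξ := by
    rw [← hm₂, hwm, ← hη, ← hξ, hwvz]
    calc (η ++ v) ++ wordMap φ f ++ (z ++ ξ)
        = η ++ ((v ++ wordMap φ f) ++ (z ++ ξ)) := by simp [List.append_assoc]
      _ = η ++ ((wordMap φR f ++ v) ++ (z ++ ξ)) := by rw [hY]
      _ = η ++ (wordMap φR f ++ (v ++ z)) ++ ξ := by simp [List.append_assoc]
  exact ⟨η.length, by
    have := factor_of_split u hfinal
    simpa using this⟩



/-- For a primitive acyclic morphism φ with leftmost conjugate φL, rightmost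
conjugate φR and conjugate word w (w φL(x) = φR(x) w), if u is a factor of a
fixed point of φ then φR(u)w is a factor as well. -/

theorem stmt11 {A : Type*} [Fintype A] (φ φL φR : A → List A) (w : List A)
    (u : ℕ → A)
    (hprim : Primitive φ) (hacyc : ¬ CyclicMorphism φ)
    (hL : IsLeftmostConjOf φL φ) (hR : IsRightmostConjOf φR φ)
    (hw : ∀ a : A, w ++ φL a = φR a ++ w)
    (hfix : ∀ n : ℕ, ∃ m : ℕ,
      wordMap φ ((List.range n).map u) = (List.range m).map u)
    (f : List A) (hf : IsFactor u f) :
    IsFactor u (wordMap φR f ++ w) := by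
  exact stmt11' φ φL φR w u hprim hacyc hL.1 hR.1 hw hfix f hf
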